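/- Let T, X : ℝ³ → ℝ be smooth functions of (t,x,u) satisfying, for a fixed nowhere-zero function f of (x, u_x): T_u X_u = 0, T_u X_t + T_t X_u = 0, and T_t X_t = f·(T_x X_x + (T_u X_x + T_x X_u) u_x) for all values of u_x (treating u_x as an independent real parameter), together with T_u X_t = 0 and T_t X_u = 0. If the Jacobian of (T, X, U) with respect to (t,x,u) is nonzero (for some U with U_u ≠ 0), then T_u = 0 and X_u = 0. -/
import Mathlib


/-- Nondegeneracy of the point transformation (T,X,U), together with the split
determining equations for admissible transformations of u_tt = f(x,u_x)u_xx + g(x,u_x),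
forces T_u = 0 and X_u = 0. All values are taken at a fixed point (t,x,u), and the
equations hold identically in the free parameter u_x. -/
theorem admissible_transformation_fiber_preserving
    (Tt Tx Tu Xt Xx Xu Ut Ux Uu : ℝ) (f : ℝ → ℝ)
    (hf : ∀ s : ℝ, f s ≠ 0)
    (h1 : Tu * Xu = 0)
    (h2 : Tu * Xt + Tt * Xu = 0)
    (h3 : ∀ ux : ℝ, Tt * Xt = f ux * (Tx * Xx + (Tu * Xx + Tx * Xu) * ux))
    (h4 : Tu * Xt = 0) (h5 : Tt * Xu = 0)
    (hU : Uu ≠ 0)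
    (hJ : Tt * (Xx * Uu - Xu * Ux) - Tx * (Xt * Uu - Xu * Ut)
            + Tu * (Xt * Ux - Xx * Ut) ≠ 0) :
    Tu = 0 ∧ Xu = 0 := by
  by_cases hTu : Tu = 0
  · refine ⟨hTu, ?_⟩
    by_contra hXu
    -- Then Tt = 0 from h5
    have hTt : Tt = 0 := by
      rcases mul_eq_zero.1 h5 with h | h
      · exact h
      · exact absurd h hXu
    -- From h3: 0 = f ux * (Tx*Xx + Tx*Xu*ux) for all ux
    have key : ∀ ux : ℝ, Tx * Xx + (Tu * Xx + Tx * Xu) * ux = 0 := by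
      intro ux
      have := h3 ux
      rw [hTt, zero_mul] at this
      exact (mul_eq_zero.1 this.symm).resolve_left (hf ux)
    have k0 := key 0
    have k1 := key 1
    have hTxXu : Tx * Xu = 0 := by
      rw [hTu] at k0 k1; nlinarith [k0, k1]
    have hTx : Tx = 0 := (mul_eq_zero.1 hTxXu).resolve_right hXu
    apply hJ
    rw [hTt, hTx, hTu]; ring
  · exfalso
    -- Tu ≠ 0 forces Xu = Xt = Xx = 0
    have hXu : Xu = 0 := (mul_eq_zero.1 h1).resolve_left hTu
    have hXt : Xt = 0 := (mul_eq_zero.1 h4).resolve_left hTu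
    have key : ∀ ux : ℝ, Tx * Xx + (Tu * Xx + Tx * Xu) * ux = 0 := by
      intro ux
      have := h3 ux
      rw [hXt, mul_zero] at this
      exact (mul_eq_zero.1 this.symm).resolve_left (hf ux)
    have k0 := key 0
    have k1 := key 1
    have hTuXx : Tu * Xx = 0 := by
      rw [hXu] at k0 k1; nlinarith [k0, k1]
    have hXx : Xx = 0 := (mul_eq_zero.1 hTuXx).resolve_left hTu
    apply hJ
    rw [hXt, hXx, hXu]; ring
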